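/- Every finitely generated submonoid of a finitely generated free group is undistorted: if M = ⟨S⟩ (as a monoid) is a submonoid of the free group F on a finite set A, then there exist constants C, D > 0 such that for all g ∈ M, the minimal length of g as a product of elements of S is at most C·|g|_A + D, where |g|_A is the word length of g in F with respect to A ∪ A⁻¹. -/

import Mathlib

namespace Stmt5Aux

open FreeGroup

variable {A : Type*} [DecidableEq A]

/-- The set of automaton states: suffixes of reduced words of generators, plus the base `[]`. -/
def SQ (S : Finset (FreeGroup A)) : Set (List (A × Bool)) :=
  {v | v = [] ∨ ∃ s ∈ S, v <:+ FreeGroup.toWord s}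

lemma nil_mem_SQ (S : Finset (FreeGroup A)) : ([] : List (A × Bool)) ∈ SQ S := Or.inl rfl

lemma mem_SQ_of_suffix {S : Finset (FreeGroup A)} {u v : List (A × Bool)}
    (h : u <:+ v) (hv : v ∈ SQ S) : u ∈ SQ S := by
  rcases hv with h0 | ⟨s, hs, hsuf⟩
  · subst h0; exact Or.inl (List.suffix_nil.mp h)
  · exact Or.inr ⟨s, hs, h.trans hsuf⟩

/-- Transitions of the flower automaton. -/
def Step (S : Finset (FreeGroup A)) (p : List (A × Bool)) (x : A × Bool)
    (q : List (A × Bool)) : Prop :=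
  p ∈ SQ S ∧ q ∈ SQ S ∧
    (p = x :: q ∨ (p = [] ∧ ∃ s ∈ S, FreeGroup.toWord s = x :: q))

/-- Paths in the flower automaton reading a word. -/
inductive Path (S : Finset (FreeGroup A)) :
    List (A × Bool) → List (A × Bool) → List (A × Bool) → Prop
  | nil (q : List (A × Bool)) : Path S q [] q
  | cons {p x q u r} : Step S p x q → Path S q u r → Path S p (x :: u) r

lemma Path.append {S : Finset (FreeGroup A)} {p u q v r : List (A × Bool)}
    (h1 : Path S p u q) (h2 : Path S q v r) : Path S p (u ++ v) r := by
  induction h1 with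
  | nil => exact h2
  | cons hs _ ih => exact Path.cons hs (ih h2)

lemma Path.single {S : Finset (FreeGroup A)} {p q : List (A × Bool)} {x : A × Bool}
    (h : Step S p x q) : Path S p [x] q := Path.cons h (Path.nil q)

/-- The Benois ε-saturation relation. -/
inductive Eps (S : Finset (FreeGroup A)) : List (A × Bool) → List (A × Bool) → Prop
  | refl (p : List (A × Bool)) : Eps S p p
  | trans {p q r} : Eps S p q → Eps S q r → Eps S p r
  | rule {p r r' q : List (A × Bool)} {x : A × Bool} :
      Step S p x r → Eps S r r' → Step S r' (x.1, !x.2) q → Eps S p q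

lemma Eps.mem {S : Finset (FreeGroup A)} {p q : List (A × Bool)}
    (h : Eps S p q) (hp : p ∈ SQ S) : q ∈ SQ S := by
  induction h with
  | refl => exact hp
  | trans _ _ ih1 ih2 => exact ih2 (ih1 hp)
  | rule _ _ h3 => exact h3.2.1

lemma mk_cons_cancel {x : A × Bool} :
    FreeGroup.mk [x, (x.1, !x.2)] = 1 := by
  have : FreeGroup.mk ([] ++ (x.1, x.2) :: (x.1, !x.2) :: []) = FreeGroup.mk ([] ++ []) :=
    Quot.sound (FreeGroup.Red.Step.not)
  simpa [FreeGroup.one_eq_mk] using this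

/-- Soundness of ε-edges: they unfold to real paths reading a word that is trivial in `F`. -/
lemma Eps.sound {S : Finset (FreeGroup A)} {p q : List (A × Bool)} (h : Eps S p q) :
    ∃ u, Path S p u q ∧ FreeGroup.mk u = 1 := by
  induction h with
  | refl p => exact ⟨[], Path.nil p, by simp [FreeGroup.one_eq_mk]⟩
  | trans _ _ ih1 ih2 =>
      obtain ⟨u1, hp1, hm1⟩ := ih1
      obtain ⟨u2, hp2, hm2⟩ := ih2
      exact ⟨u1 ++ u2, hp1.append hp2, by rw [← FreeGroup.mul_mk, hm1, hm2, one_mul]⟩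
  | @rule p r r' q x h1 _ h3 ih =>
      obtain ⟨u, hp, hm⟩ := ih
      refine ⟨x :: (u ++ [(x.1, !x.2)]), Path.cons h1 (hp.append (Path.single h3)), ?_⟩
      have : FreeGroup.mk (x :: (u ++ [(x.1, !x.2)]))
          = FreeGroup.mk [x] * FreeGroup.mk u * FreeGroup.mk [(x.1, !x.2)] := by
        rw [FreeGroup.mul_mk, FreeGroup.mul_mk]; rfl
      rw [this, hm, mul_one, FreeGroup.mul_mk]
      exact mk_cons_cancel

/-- Saturated paths: a path in the saturated automaton, in normal form where
ε-moves occur just before each letter and once at the end. -/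
inductive SPath (S : Finset (FreeGroup A)) :
    List (A × Bool) → List (A × Bool) → List (A × Bool) → Prop
  | nil {q q'} : Eps S q q' → SPath S q [] q'
  | cons {p p' x q u r} : Eps S p p' → Step S p' x q → SPath S q u r → SPath S p (x :: u) r

lemma SPath.eps_head {S : Finset (FreeGroup A)} {p p' u r : List (A × Bool)}
    (h : Eps S p p') (hs : SPath S p' u r) : SPath S p u r := by
  cases hs with
  | nil h' => exact SPath.nil (h.trans h')
  | cons h' hst hrest => exact SPath.cons (h.trans h') hst hrest

lemma Path.toSPath {S : Finset (FreeGroup A)} {p u r : List (A × Bool)}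
    (h : Path S p u r) : SPath S p u r := by
  induction h with
  | nil q => exact SPath.nil (Eps.refl q)
  | cons hst _ ih => exact SPath.cons (Eps.refl _) hst ih

/-- Saturated paths absorb one step of free reduction of the word read. -/
lemma SPath.red_step {S : Finset (FreeGroup A)} {r : List (A × Bool)}
    {x : A} {b : Bool} :
    ∀ (L₁ : List (A × Bool)) {L₂ p},
      SPath S p (L₁ ++ (x, b) :: (x, !b) :: L₂) r → SPath S p (L₁ ++ L₂) r := by
  intro L₁
  induction L₁ with
  | nil =>
      intro L₂ p hs
      cases hs with
      | cons h1 hst hrest =>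
          cases hrest with
          | cons h2 hst2 hrest2 =>
              have heps : Eps S p _ :=
                h1.trans (Eps.rule hst h2 hst2)
              exact hrest2.eps_head heps
  | cons y L₁ ih =>
      intro L₂ p hs
      cases hs with
      | cons h1 hst hrest => exact SPath.cons h1 hst (ih hrest)

lemma SPath.of_red {S : Finset (FreeGroup A)} {p r u v : List (A × Bool)}
    (hred : FreeGroup.Red u v) (hs : SPath S p u r) : SPath S p v r := by
  induction hred with
  | refl => exact hs
  | tail _ hstep ih =>
      cases hstep with
      | not => exact SPath.red_step _ ih

/-- Soundness of paths into the base state: they yield factorizations over `S`. -/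
lemma Path.sound {S : Finset (FreeGroup A)} {p u : List (A × Bool)}
    (h : Path S p u []) :
    ∃ l : List (FreeGroup A), (∀ a ∈ l, a ∈ S) ∧
      FreeGroup.mk p * l.prod = FreeGroup.mk u ∧ l.length ≤ u.length := by
  generalize hr : ([] : List (A × Bool)) = r at h
  induction h with
  | nil q => subst hr; exact ⟨[], by simp, by simp, by simp⟩
  | @cons p x q u r hst _ ih =>
      obtain ⟨l, hlS, hlp, hll⟩ := ih hr
      rcases hst.2.2 with hpq | ⟨hp0, s, hsS, hsw⟩
      · refine ⟨l, hlS, ?_, Nat.le_succ_of_le hll⟩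
        subst hpq
        rw [show FreeGroup.mk (x :: q) = FreeGroup.mk [x] * FreeGroup.mk q from
              by rw [FreeGroup.mul_mk]; rfl,
            show FreeGroup.mk (x :: u) = FreeGroup.mk [x] * FreeGroup.mk u from
              by rw [FreeGroup.mul_mk]; rfl,
            mul_assoc, hlp]
      · refine ⟨s :: l, fun a ha => ?_, ?_, by simpa using Nat.succ_le_succ hll⟩
        · rcases List.mem_cons.mp ha with h | h
          · exact h ▸ hsS
          · exact hlS a h
        · subst hp0
          have h1 : FreeGroup.mk (x :: q) = FreeGroup.mk [x] * FreeGroup.mk q := by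
            rw [FreeGroup.mul_mk]; rfl
          have h2 : FreeGroup.mk (x :: u) = FreeGroup.mk [x] * FreeGroup.mk u := by
            rw [FreeGroup.mul_mk]; rfl
          calc FreeGroup.mk [] * (s :: l).prod = s * l.prod := by simp [FreeGroup.one_eq_mk.symm]
            _ = FreeGroup.mk (FreeGroup.toWord s) * l.prod := by rw [FreeGroup.mk_toWord]
            _ = FreeGroup.mk [x] * (FreeGroup.mk q * l.prod) := by
                rw [hsw, h1, mul_assoc]
            _ = FreeGroup.mk [x] * FreeGroup.mk u := by
                rw [show FreeGroup.mk q * l.prod = FreeGroup.mk u from by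
                  have := hlp; rwa [show FreeGroup.mk q * l.prod
                    = FreeGroup.mk q * l.prod from rfl] ]
            _ = FreeGroup.mk (x :: u) := h2.symm

/-- Draining a state: every state can read its own word down to the base. -/
lemma drain {S : Finset (FreeGroup A)} :
    ∀ v ∈ SQ S, Path S v v ([] : List (A × Bool)) := by
  intro v
  induction v with
  | nil => intro _; exact Path.nil []
  | cons x v ih =>
      intro hv
      have hv' : v ∈ SQ S := mem_SQ_of_suffix (List.suffix_cons x v) hv
      exact Path.cons ⟨hv, hv', Or.inl rfl⟩ (ih hv')

lemma petal {S : Finset (FreeGroup A)} {s : FreeGroup A} (hs : s ∈ S) :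
    Path S [] (FreeGroup.toWord s) ([] : List (A × Bool)) := by
  cases hw : FreeGroup.toWord s with
  | nil => exact Path.nil []
  | cons x v =>
      have hvmem : v ∈ SQ S := Or.inr ⟨s, hs, by rw [hw]; exact List.suffix_cons x v⟩
      exact Path.cons ⟨nil_mem_SQ S, hvmem, Or.inr ⟨rfl, s, hs, hw⟩⟩ (drain v hvmem)

lemma complete {S : Finset (FreeGroup A)} :
    ∀ l : List (FreeGroup A), (∀ a ∈ l, a ∈ S) →
      ∃ u, Path S [] u ([] : List (A × Bool)) ∧ FreeGroup.mk u = l.prod := by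
  intro l
  induction l with
  | nil => exact fun _ => ⟨[], Path.nil [], by simp [FreeGroup.one_eq_mk]⟩
  | cons s l ih =>
      intro hl
      obtain ⟨u, hp, hm⟩ := ih (fun a ha => hl a (List.mem_cons_of_mem s ha))
      refine ⟨FreeGroup.toWord s ++ u, (petal (hl s (List.mem_cons_self (a := s) (l := l)))).append hp, ?_⟩
      rw [← FreeGroup.mul_mk, FreeGroup.mk_toWord, hm, List.prod_cons]

/-- Finset of states, for extracting a uniform bound. -/
def SQfin (S : Finset (FreeGroup A)) : Finset (List (A × Bool)) :=
  insert [] (S.biUnion fun s => (FreeGroup.toWord s).tails.toFinset)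

lemma mem_SQfin {S : Finset (FreeGroup A)} {v : List (A × Bool)} (h : v ∈ SQ S) :
    v ∈ SQfin S := by
  rcases h with h0 | ⟨s, hs, hsuf⟩
  · exact h0 ▸ Finset.mem_insert_self _ _
  · exact Finset.mem_insert_of_mem (Finset.mem_biUnion.mpr
      ⟨s, hs, List.mem_toFinset.mpr ((List.mem_tails _ _).mpr hsuf)⟩)

/-- A uniform bound on unfoldings of ε-edges between states. -/
lemma exists_bound (S : Finset (FreeGroup A)) :
    ∃ B : ℕ, ∀ p q : List (A × Bool), p ∈ SQ S → q ∈ SQ S → Eps S p q →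
      ∃ u, Path S p u q ∧ FreeGroup.mk u = 1 ∧ u.length ≤ B := by
  classical
  refine ⟨(SQfin S ×ˢ SQfin S).sup (fun pq =>
    if h : Eps S pq.1 pq.2 then (Eps.sound h).choose.length else 0), ?_⟩
  intro p q hp hq h
  obtain ⟨h1, h2⟩ := (Eps.sound h).choose_spec
  refine ⟨(Eps.sound h).choose, h1, h2, ?_⟩
  have hmem : (p, q) ∈ SQfin S ×ˢ SQfin S :=
    Finset.mem_product.mpr ⟨mem_SQfin hp, mem_SQfin hq⟩
  have := Finset.le_sup (f := fun pq : List (A × Bool) × List (A × Bool) =>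
    if h : Eps S pq.1 pq.2 then (Eps.sound h).choose.length else 0) hmem
  simpa [dif_pos h] using this

/-- Unfolding a saturated path into a real path, with linear length control. -/
lemma SPath.unsat {S : Finset (FreeGroup A)} {B : ℕ}
    (hB : ∀ p q : List (A × Bool), p ∈ SQ S → q ∈ SQ S → Eps S p q →
      ∃ u, Path S p u q ∧ FreeGroup.mk u = 1 ∧ u.length ≤ B) :
    ∀ {p w q : List (A × Bool)}, SPath S p w q → p ∈ SQ S →
      ∃ u, Path S p u q ∧ FreeGroup.mk u = FreeGroup.mk w ∧
        u.length ≤ (B + 1) * w.length + B := by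
  intro p w q hs
  induction hs with
  | @nil q q' h =>
      intro hp
      obtain ⟨u, h1, h2, h3⟩ := hB q q' hp (h.mem hp) h
      exact ⟨u, h1, by simpa [FreeGroup.one_eq_mk] using h2, by simpa using h3⟩
  | @cons p p' x q u r heps hst _ ih =>
      intro hp
      have hp' : p' ∈ SQ S := heps.mem hp
      obtain ⟨u0, h1, h2, h3⟩ := hB p p' hp hp' heps
      obtain ⟨u1, g1, g2, g3⟩ := ih hst.2.1
      refine ⟨u0 ++ x :: u1, h1.append (Path.cons hst g1), ?_, ?_⟩
      · have e1 : FreeGroup.mk (u0 ++ x :: u1)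
            = FreeGroup.mk u0 * (FreeGroup.mk [x] * FreeGroup.mk u1) := by
          rw [FreeGroup.mul_mk, FreeGroup.mul_mk]; rfl
        have e2 : FreeGroup.mk (x :: u) = FreeGroup.mk [x] * FreeGroup.mk u := by
          rw [FreeGroup.mul_mk]; rfl
        rw [e1, h2, one_mul, g2, e2]
      · have : u0.length + (1 + u1.length) ≤ B + (1 + ((B + 1) * u.length + B)) :=
          Nat.add_le_add h3 (Nat.add_le_add_left g3 1)
        calc (u0 ++ x :: u1).length = u0.length + (1 + u1.length) := by
              simp [List.length_append]; ring
          _ ≤ B + (1 + ((B + 1) * u.length + B)) := this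
          _ = (B + 1) * (x :: u).length + B := by
              simp [List.length_cons]; ring

end Stmt5Aux

/-- Every finitely generated submonoid `M = ⟨S⟩` of a free group on a finite
set `A` is undistorted: there are constants `C, D > 0` such that every `g ∈ M` admits a
factorization over `S` of length at most `C·|g|_A + D`, where `|g|_A` is the reduced word
length of `g`. -/
theorem stmt5 {A : Type*} [Fintype A] [DecidableEq A] (S : Finset (FreeGroup A)) :
    ∃ C D : ℕ, 0 < C ∧ 0 < D ∧
      ∀ g ∈ Submonoid.closure (S : Set (FreeGroup A)),
        ∃ l : List (FreeGroup A), (∀ a ∈ l, a ∈ S) ∧ l.prod = g ∧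
          l.length ≤ C * (FreeGroup.toWord g).length + D := by
  obtain ⟨B, hB⟩ := Stmt5Aux.exists_bound S
  refine ⟨B + 1, B + 1, Nat.succ_pos B, Nat.succ_pos B, ?_⟩
  intro g hg
  obtain ⟨l0, hl0S, hl0p⟩ := Submonoid.exists_list_of_mem_closure hg
  obtain ⟨u, hpath, hmk⟩ := Stmt5Aux.complete l0 hl0S
  have hred : FreeGroup.Red u (FreeGroup.toWord g) := by
    have : FreeGroup.toWord g = FreeGroup.reduce u := by
      rw [← hl0p, ← hmk, FreeGroup.toWord_mk]
    rw [this]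
    exact FreeGroup.reduce.red
  have hsp : Stmt5Aux.SPath S [] (FreeGroup.toWord g) [] :=
    Stmt5Aux.SPath.of_red hred hpath.toSPath
  obtain ⟨u', hpath', hmk', hlen'⟩ :=
    Stmt5Aux.SPath.unsat hB hsp (Stmt5Aux.nil_mem_SQ S)
  obtain ⟨l, hlS, hlp, hll⟩ := hpath'.sound
  refine ⟨l, hlS, ?_, ?_⟩
  · have h0 : FreeGroup.mk ([] : List (A × Bool)) = 1 := FreeGroup.one_eq_mk.symm
    rw [h0, one_mul] at hlp
    rw [hlp, hmk', FreeGroup.mk_toWord]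
  · calc l.length ≤ u'.length := hll
      _ ≤ (B + 1) * (FreeGroup.toWord g).length + B := hlen'
      _ ≤ (B + 1) * (FreeGroup.toWord g).length + (B + 1) := by omega
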